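/- Two finite nonempty subsets A, B of ℤⁿ satisfy A + C = B + C for some finite nonempty C ⊆ ℤⁿ if and only if conv(A) = conv(B). -/

import Mathlib

open Pointwise

/-- The canonical embedding `ℤⁿ → ℝⁿ`. -/
def latticeEmb (n : ℕ) : (Fin n → ℤ) → (Fin n → ℝ) := fun v i => (v i : ℝ)

def embQ (n : ℕ) : (Fin n → ℚ) → (Fin n → ℝ) := fun v i => (v i : ℝ)

def embQL (n : ℕ) : (Fin n → ℚ) →ₗ[ℚ] (Fin n → ℝ) where
  toFun := embQ n
  map_add' a b := by funext i; simp [embQ]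
  map_smul' q a := by funext i; simp [embQ, Rat.smul_def]

lemma embQ_inj (n : ℕ) : Function.Injective (embQ n) := by
  intro a b h
  funext i
  have : ((a i : ℝ)) = (b i : ℝ) := congrFun h i
  exact_mod_cast this

-- cast of Fin.cons
lemma embQ_cons (n : ℕ) (q : ℚ) (v : Fin n → ℚ) :
    embQ (n+1) (Fin.cons q v) = Fin.cons (q : ℝ) (embQ n v) := by
  funext i
  refine Fin.cases ?_ ?_ i <;> simp [embQ]

lemma indep_Q2R {ι : Type*} {m : ℕ} (v : ι → (Fin m → ℚ))
    (hv : LinearIndependent ℚ v) :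
    LinearIndependent ℝ (fun i => embQ m (v i)) := by
  rw [linearIndependent_iff'] at hv ⊢
  intro s g hg i hi
  set b := Module.Basis.ofVectorSpace ℚ ℝ with hb
  have key : ∀ j, ∀ i ∈ s, b.repr (g i) j = 0 := by
    intro j
    refine hv s (fun i => b.repr (g i) j) ?_
    funext x
    have hgx : ∑ i ∈ s, g i * ((v i x : ℚ) : ℝ) = 0 := by
      have := congrFun hg x
      simpa [Finset.sum_apply, embQ] using this
    have hrepr : b.repr (∑ i ∈ s, (v i x) • (g i)) j = 0 := by
      have : (∑ i ∈ s, (v i x) • (g i)) = 0 := by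
        rw [← hgx]; apply Finset.sum_congr rfl; intro i _
        rw [Rat.smul_def]; ring
      rw [this]; simp
    rw [map_sum] at hrepr
    simpa [Finsupp.smul_apply, mul_comm] using hrepr
  have : b.repr (g i) = 0 := by
    ext j; exact key j i hi
  have := b.repr.injective (by simpa using this)
  simpa using this

/-- Rational Carathéodory: a rational point in the real convex hull of a set of rational
points is a rational convex combination of them. -/
lemma ratCara (n : ℕ) (s : Set (Fin n → ℚ)) (x : Fin n → ℚ)
    (hx : embQ n x ∈ convexHull ℝ (embQ n '' s)) :
    ∃ (ι : Type) (_ : Fintype ι) (a : ι → Fin n → ℚ) (c : ι → ℚ),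
      (∀ i, a i ∈ s) ∧ (∀ i, 0 ≤ c i) ∧ ∑ i, c i = 1 ∧ ∑ i, c i • a i = x := by
  obtain ⟨ι, hι, z, w, hzs, hzind, hwpos, hwsum, hwx⟩ :=
    eq_pos_convex_span_of_mem_convexHull hx
  -- choose rational preimages
  have hze : ∀ i, ∃ a, a ∈ s ∧ embQ n a = z i := by
    intro i
    obtain ⟨a, ha, hae⟩ := hzs ⟨i, rfl⟩
    exact ⟨a, ha, hae⟩
  choose a has hae using hze
  -- lifted families
  set U : ι → (Fin (n+1) → ℚ) := fun i => Fin.cons 1 (a i) with hU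
  set X : Fin (n+1) → ℚ := Fin.cons 1 x with hX
  -- real independence of the lift of z
  have hzlin : LinearIndependent ℝ (fun i => (Fin.cons 1 (z i) : Fin (n+1) → ℝ)) := by
    rw [Fintype.linearIndependent_iff]
    intro g hg
    have h0 : ∑ i, g i = 0 := by
      have := congrFun hg 0
      simpa [Finset.sum_apply] using this
    have h1 : ∑ i, g i • z i = 0 := by
      funext j
      have := congrFun hg j.succ
      simpa [Finset.sum_apply] using this
    rw [affineIndependent_iff] at hzind
    exact fun i => hzind Finset.univ g h0 h1 i (Finset.mem_univ i)
  -- hence ℚ-independence of U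
  have hUlin : LinearIndependent ℚ U := by
    have : LinearIndependent ℝ (fun i => embQ (n+1) (U i)) := by
      have he : (fun i => embQ (n+1) (U i)) = (fun i => (Fin.cons 1 (z i) : Fin (n+1) → ℝ)) := by
        funext i
        rw [hU]
        show embQ (n+1) (Fin.cons 1 (a i)) = _
        rw [embQ_cons, hae i]; norm_num
      rw [he]; exact hzlin
    have hQ : LinearIndependent ℚ (fun i => embQ (n+1) (U i)) := this.restrict_scalars
      (by intro c x hx; simpa [Rat.smul_def] using hx)
    exact hQ.of_comp (embQL (n+1))
  -- X is in the real span of the U's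
  have hXspan : embQ (n+1) X ∈ Submodule.span ℝ (Set.range (fun i => embQ (n+1) (U i))) := by
    have : embQ (n+1) X = ∑ i, w i • embQ (n+1) (U i) := by
      funext j
      refine Fin.cases ?_ ?_ j
      · simpa [hX, hU, embQ_cons, Finset.sum_apply, embQ] using hwsum.symm
      · intro j
        have hwj := congrFun hwx j
        simp only [Finset.sum_apply, Pi.smul_apply, smul_eq_mul] at hwj ⊢
        have h1 : embQ (n+1) X j.succ = ((x j : ℚ) : ℝ) := by
          simp [hX, embQ_cons, embQ]
        have h2 : ∀ i, embQ (n+1) (U i) j.succ = z i j := by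
          intro i
          rw [hU]
          show embQ (n+1) (Fin.cons 1 (a i)) j.succ = _
          rw [embQ_cons, hae i]; simp
        rw [h1]
        simp only [h2]
        rw [hwj]
        rfl
    rw [this]
    exact Submodule.sum_mem _ fun i _ =>
      Submodule.smul_mem _ _ (Submodule.subset_span ⟨i, rfl⟩)
  -- so X is in the rational span of the U's
  have hXQ : X ∈ Submodule.span ℚ (Set.range U) := by
    by_contra hXQ
    have : LinearIndependent ℚ (fun o : Option ι => (Option.elim o X U)) := by
      rw [linearIndependent_option]
      exact ⟨hUlin, by simpa [Function.comp_def] using hXQ⟩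
    have hR := indep_Q2R _ this
    rw [linearIndependent_option] at hR
    apply hR.2
    simpa [Function.comp_def] using hXspan
  obtain ⟨cq, hcq⟩ := (Finsupp.mem_span_range_iff_exists_finsupp).1 hXQ
  rw [Finsupp.sum_fintype _ _ (fun i => zero_smul ℚ (U i))] at hcq
  -- rational weights
  set c : ι → ℚ := fun i => cq i with hc
  have hcsum : ∑ i, c i = 1 := by
    have := congrFun hcq 0
    simpa [hU, hX, Finset.sum_apply, Pi.smul_apply] using this
  have hcx : ∑ i, c i • a i = x := by
    funext j
    have := congrFun hcq j.succ
    simpa [hU, hX, Finset.sum_apply, Pi.smul_apply, Fin.cons_succ] using this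
  -- the rational weights agree with the real ones, so they are nonnegative
  have hcw : ∀ i, (c i : ℝ) = w i := by
    have := (affineIndependent_iff_eq_of_fintype_affineCombination_eq ℝ z).1 hzind
      (fun i => (c i : ℝ)) w (by exact_mod_cast hcsum) hwsum ?_
    · exact fun i => congrFun this i
    · rw [Finset.univ.affineCombination_eq_linear_combination z _ (by exact_mod_cast hcsum),
        Finset.univ.affineCombination_eq_linear_combination z w hwsum, hwx]
      funext j
      have hj := congrFun hcx j
      simp only [Finset.sum_apply, Pi.smul_apply, smul_eq_mul] at hj ⊢
      have : ∀ i, z i j = ((a i j : ℚ) : ℝ) := by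
        intro i; rw [← hae i]; rfl
      simp only [this, embQ]
      exact_mod_cast hj
  refine ⟨ι, hι, a, c, has, fun i => ?_, hcsum, hcx⟩
  have := hwpos i
  rw [← hcw i] at this
  exact_mod_cast this.le

variable {G : Type*} [AddCommMonoid G]

lemma nsmul_mem_nsmul {A : Set G} {a : G} (ha : a ∈ A) (k : ℕ) : k • a ∈ k • A := by
  induction k with
  | zero => simp [zero_nsmul]
  | succ k ih =>
      rw [succ_nsmul', succ_nsmul']
      exact Set.add_mem_add ha ih

lemma nsmul_subset_nsmul {A D : Set G} (h : A ⊆ D) (k : ℕ) : k • A ⊆ k • D := by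
  induction k with
  | zero => simp [zero_nsmul]
  | succ k ih =>
      rw [succ_nsmul', succ_nsmul']
      exact Set.add_subset_add h ih

lemma sum_mem_sum {ι : Type*} (s : Finset ι) (f : ι → G) (S : ι → Set G)
    (h : ∀ i ∈ s, f i ∈ S i) : ∑ i ∈ s, f i ∈ ∑ i ∈ s, S i := by
  classical
  induction s using Finset.cons_induction with
  | empty => simp
  | cons a s ha ih =>
      rw [Finset.sum_cons, Finset.sum_cons]
      exact Set.add_mem_add (h a (Finset.mem_cons_self a s))
        (ih fun i hi => h i (Finset.mem_cons_of_mem hi))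

lemma sum_nsmul_set {ι : Type*} (s : Finset ι) (k : ι → ℕ) (A : Set G) :
    (∑ i ∈ s, k i) • A = ∑ i ∈ s, (k i) • A := by
  classical
  induction s using Finset.cons_induction with
  | empty => simp [zero_nsmul]
  | cons a s ha ih => rw [Finset.sum_cons, Finset.sum_cons, add_nsmul, ih]

lemma mem_nsmul_iff_multiset {D : Set G} (k : ℕ) (x : G) :
    x ∈ k • D ↔ ∃ m : Multiset G, (∀ y ∈ m, y ∈ D) ∧ Multiset.card m = k ∧ m.sum = x := by
  induction k generalizing x with
  | zero =>
      simp only [zero_nsmul]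
      constructor
      · intro hx
        refine ⟨0, by simp, by simp, ?_⟩
        simpa using (Set.mem_zero.1 hx).symm
      · rintro ⟨m, hm, hcard, hsum⟩
        rw [Multiset.card_eq_zero] at hcard
        subst hcard
        simp at hsum
        rw [Set.mem_zero]
        exact hsum.symm
  | succ k ih =>
      rw [succ_nsmul']
      constructor
      · rintro ⟨d, hd, y, hy, rfl⟩
        obtain ⟨m, hm, hcard, hsum⟩ := (ih _).1 hy
        exact ⟨d ::ₘ m, by
          intro z hz
          rcases Multiset.mem_cons.1 hz with rfl | hz
          · exact hd
          · exact hm z hz, by simp [hcard], by simp [hsum]⟩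
      · rintro ⟨m, hm, hcard, hsum⟩
        have hne : m ≠ 0 := by
          intro h; rw [h] at hcard; simp at hcard
        obtain ⟨d, hd⟩ := Multiset.exists_mem_of_ne_zero hne
        obtain ⟨m', rfl⟩ := Multiset.exists_cons_of_mem hd
        refine ⟨d, hm d hd, m'.sum, ?_, by simpa using hsum⟩
        refine (ih _).2 ⟨m', fun y hy => hm y (Multiset.mem_cons_of_mem hy), ?_, rfl⟩
        simpa using hcard

def intQ (n : ℕ) : (Fin n → ℤ) → (Fin n → ℚ) := fun v i => (v i : ℚ)

lemma latticeEmb_eq_comp (n : ℕ) : latticeEmb n = embQ n ∘ intQ n := by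
  funext v i; simp [latticeEmb, embQ, intQ]

/-- If a lattice point is in the real convex hull of a finite set of lattice points, then
some positive multiple `N • c` lies in the `N`-fold Minkowski sum of `A`. -/
lemma exists_nsmul_mem (n : ℕ) (A : Set (Fin n → ℤ)) (c : Fin n → ℤ)
    (hc : latticeEmb n c ∈ convexHull ℝ (latticeEmb n '' A)) :
    ∃ N : ℕ, 0 < N ∧ N • c ∈ N • A := by
  rw [latticeEmb_eq_comp, Set.image_comp] at hc
  obtain ⟨ι, hι, a, w, has, hw0, hwsum, hwx⟩ := ratCara n (intQ n '' A) (intQ n c) hc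
  have hα : ∀ i, ∃ α, α ∈ A ∧ intQ n α = a i := fun i => has i
  choose α hαA hαa using hα
  -- common denominator
  set N : ℕ := ∏ i, (w i).den with hN
  have hNpos : 0 < N := Finset.prod_pos fun i _ => (w i).pos
  -- integer weights
  have hdvd : ∀ i, (w i).den ∣ N := fun i => Finset.dvd_prod_of_mem _ (Finset.mem_univ i)
  set k : ι → ℕ := fun i => (w i).num.toNat * (N / (w i).den) with hk
  have hkq : ∀ i, ((k i : ℚ)) = w i * N := by
    intro i
    obtain ⟨t, ht⟩ := hdvd i
    have hnum : (((w i).num.toNat : ℕ) : ℚ) = ((w i).num : ℚ) := by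
      exact_mod_cast Int.toNat_of_nonneg (Rat.num_nonneg.2 (hw0 i))
    have hNt : N / (w i).den = t := by rw [ht]; exact Nat.mul_div_cancel_left t (w i).pos
    have h1 : w i * ((w i).den : ℚ) = (w i).num := Rat.mul_den_eq_num (w i)
    have h2 : w i * N = ((w i).num : ℚ) * t := by
      rw [ht]; push_cast; rw [← mul_assoc, h1]
    rw [hk]
    simp only [hNt]
    push_cast
    rw [hnum, ← h2]
  have hksum : ∑ i, k i = N := by
    have : ((∑ i, k i : ℕ) : ℚ) = ((N : ℕ) : ℚ) := by
      push_cast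
      rw [Finset.sum_congr rfl (fun i _ => hkq i), ← Finset.sum_mul, hwsum, one_mul]
    exact_mod_cast this
  have hkrep : ∑ i, (k i) • (α i) = N • c := by
    funext j
    have hcoord : ∑ i, w i * ((α i j : ℤ) : ℚ) = ((c j : ℤ) : ℚ) := by
      have h := congrFun hwx j
      simp only [Finset.sum_apply, Pi.smul_apply, smul_eq_mul] at h
      have h2 : ∀ i, a i j = ((α i j : ℤ) : ℚ) := fun i => by rw [← hαa i]; rfl
      simp only [h2] at h
      exact h
    have key : ∀ i, (((k i • α i) j : ℤ) : ℚ) = w i * (N : ℚ) * ((α i j : ℤ) : ℚ) := by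
      intro i
      rw [Pi.smul_apply, nsmul_eq_mul]
      push_cast
      rw [hkq i]
    have hfin : (((∑ i, k i • α i) j : ℤ) : ℚ) = (((N • c) j : ℤ) : ℚ) := by
      rw [Finset.sum_apply]
      push_cast
      calc ∑ i, (((k i • α i) j : ℤ) : ℚ)
          = ∑ i, w i * (N : ℚ) * ((α i j : ℤ) : ℚ) := Finset.sum_congr rfl fun i _ => key i
        _ = (N : ℚ) * ∑ i, w i * ((α i j : ℤ) : ℚ) := by
            rw [Finset.mul_sum]; apply Finset.sum_congr rfl; intros; ring
        _ = (N : ℚ) * ((c j : ℤ) : ℚ) := by rw [hcoord]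
        _ = (((N • c) j : ℤ) : ℚ) := by
            rw [Pi.smul_apply, nsmul_eq_mul]; push_cast; ring
    exact_mod_cast hfin
  refine ⟨N, hNpos, ?_⟩
  rw [← hkrep, ← hksum, sum_nsmul_set]
  exact sum_mem_sum _ _ _ fun i _ => nsmul_mem_nsmul (hαA i) (k i)

lemma nsmul_set_finite {n : ℕ} {D : Set (Fin n → ℤ)} (hD : D.Finite) (m : ℕ) :
    (m • D).Finite := by
  induction m with
  | zero => rw [zero_nsmul]; exact Set.finite_zero
  | succ m ih => rw [succ_nsmul']; exact hD.add ih

lemma nsmul_set_nonempty {n : ℕ} {D : Set (Fin n → ℤ)} (hD : D.Nonempty) (m : ℕ) :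
    (m • D).Nonempty := by
  induction m with
  | zero => rw [zero_nsmul]; exact ⟨0, Set.mem_zero.2 rfl⟩
  | succ m ih => rw [succ_nsmul']; exact hD.add ih

lemma step_lemma (n : ℕ) (A D : Set (Fin n → ℤ)) (hAD : A ⊆ D) (hDfin : D.Finite)
    (hhull : ∀ c ∈ D, latticeEmb n c ∈ convexHull ℝ (latticeEmb n '' A)) :
    ∃ M : ℕ, ∀ m : ℕ, M ≤ m → A + m • D = (m+1) • D := by
  classical
  have hN : ∀ c ∈ D, ∃ N : ℕ, 0 < N ∧ N • c ∈ N • A := fun c hc =>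
    exists_nsmul_mem n A c (hhull c hc)
  choose! N hNpos hNmem using hN
  set t := hDfin.toFinset with ht
  set M := ∑ c ∈ t, (N c - 1) with hM
  have base : A + M • D = (M+1) • D := by
    apply Set.Subset.antisymm
    · rw [succ_nsmul']
      exact Set.add_subset_add hAD subset_rfl
    · intro x hx
      obtain ⟨m, hmD, hmcard, hmsum⟩ := (mem_nsmul_iff_multiset (M+1) x).1 hx
      have hsubt : m.toFinset ⊆ t := by
        intro c hc
        rw [Set.Finite.mem_toFinset]
        exact hmD c (Multiset.mem_toFinset.1 hc)
      have hpig : ∃ c ∈ t, N c ≤ m.count c := by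
        by_contra hcon
        push_neg at hcon
        have hle : Multiset.card m ≤ M := by
          calc Multiset.card m = ∑ c ∈ m.toFinset, m.count c :=
                (Multiset.toFinset_sum_count_eq m).symm
            _ ≤ ∑ c ∈ t, m.count c := Finset.sum_le_sum_of_subset hsubt
            _ ≤ ∑ c ∈ t, (N c - 1) := Finset.sum_le_sum fun c hc => by
                have := hcon c hc; omega
        omega
      obtain ⟨c₀, hc₀t, hcount⟩ := hpig
      have hc₀D : c₀ ∈ D := (Set.Finite.mem_toFinset hDfin).1 hc₀t
      have hrep : Multiset.replicate (N c₀) c₀ ≤ m :=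
        Multiset.le_count_iff_replicate_le.1 hcount
      obtain ⟨m', hm'⟩ := Multiset.le_iff_exists_add.1 hrep
      have hcard' : Multiset.card m' = M + 1 - N c₀ := by
        have := congrArg Multiset.card hm'
        simp [hmcard] at this
        omega
      have hN1 : 1 ≤ N c₀ := hNpos c₀ hc₀D
      have hNM : N c₀ ≤ M + 1 := by
        have : N c₀ - 1 ≤ M := by
          rw [hM]
          exact Finset.single_le_sum (f := fun c => N c - 1) (fun _ _ => Nat.zero_le _) hc₀t
        omega
      have hxeq : x = (N c₀) • c₀ + m'.sum := by
        rw [← hmsum, hm', Multiset.sum_add, Multiset.sum_replicate]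
      have h1 : (N c₀) • c₀ ∈ A + (N c₀ - 1) • D := by
        have h0 := hNmem c₀ hc₀D
        have he : N c₀ = (N c₀ - 1) + 1 := by omega
        have hset : (N c₀) • A = A + (N c₀ - 1) • A := by
          conv_lhs => rw [he, succ_nsmul']
        rw [hset] at h0
        exact Set.add_subset_add subset_rfl (nsmul_subset_nsmul hAD _) h0
      have h2 : m'.sum ∈ (M + 1 - N c₀) • D := by
        rw [mem_nsmul_iff_multiset]
        exact ⟨m', fun y hy => hmD y (hm' ▸ Multiset.mem_add.2 (Or.inr hy)), hcard', rfl⟩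
      rw [hxeq]
      have : (N c₀) • c₀ + m'.sum ∈ (A + (N c₀ - 1) • D) + (M + 1 - N c₀) • D :=
        Set.add_mem_add h1 h2
      rw [add_assoc, ← add_nsmul] at this
      have harith : (N c₀ - 1) + (M + 1 - N c₀) = M := by omega
      rwa [harith] at this
  have main : ∀ j : ℕ, A + (M + j) • D = (M + j + 1) • D := by
    intro j
    induction j with
    | zero => simpa using base
    | succ j ih =>
        have e1 : (M + (j+1)) • D = (M + j) • D + D := by
          rw [show M + (j+1) = (M + j) + 1 by ring, succ_nsmul]
        rw [e1, ← add_assoc, ih, ← succ_nsmul]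
        rfl
  refine ⟨M, fun m hm => ?_⟩
  obtain ⟨j, rfl⟩ := Nat.exists_eq_add_of_le hm
  exact main j

lemma latticeEmb_add (n : ℕ) (a b : Fin n → ℤ) :
    latticeEmb n (a + b) = latticeEmb n a + latticeEmb n b := by
  funext i; simp [latticeEmb]

lemma hull_subset_of_add_eq (n : ℕ) (A B C : Set (Fin n → ℤ))
    (hAfin : A.Finite) (hAne : A.Nonempty) (hBfin : B.Finite) (hBne : B.Nonempty)
    (hCfin : C.Finite) (hCne : C.Nonempty) (h : A + C = B + C) :
    convexHull ℝ (latticeEmb n '' A) ⊆ convexHull ℝ (latticeEmb n '' B) := by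
  intro x hx
  by_contra hxB
  obtain ⟨f, u, hfu, hux⟩ := geometric_hahn_banach_closed_point
    (convex_convexHull ℝ _) ((hBfin.image _).isCompact_convexHull ℝ).isClosed hxB
  set g : (Fin n → ℤ) → ℝ := fun v => f (latticeEmb n v) with hg
  obtain ⟨a0, ha0, hamax⟩ := hAfin.toFinset.exists_max_image g (by simpa using hAne)
  obtain ⟨b0, hb0, hbmax⟩ := hBfin.toFinset.exists_max_image g (by simpa using hBne)
  obtain ⟨c0, hc0, hcmax⟩ := hCfin.toFinset.exists_max_image g (by simpa using hCne)
  simp only [Set.Finite.mem_toFinset] at ha0 hb0 hc0 hamax hbmax hcmax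
  have gadd : ∀ v w, g (v + w) = g v + g w := by
    intro v w; simp [hg, latticeEmb_add]
  -- max over A equals max over B
  have hMab : g a0 = g b0 := by
    have h1 : a0 + c0 ∈ B + C := by rw [← h]; exact Set.add_mem_add ha0 hc0
    have h2 : b0 + c0 ∈ A + C := by rw [h]; exact Set.add_mem_add hb0 hc0
    obtain ⟨b, hb, c, hc, hbc⟩ := h1
    obtain ⟨a, ha, c', hc', hac⟩ := h2
    have e1 : g a0 + g c0 ≤ g b0 + g c0 := by
      calc g a0 + g c0 = g (a0 + c0) := (gadd _ _).symm
        _ = g b + g c := by rw [← hbc, gadd]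
        _ ≤ g b0 + g c0 := add_le_add (hbmax b hb) (hcmax c hc)
    have e2 : g b0 + g c0 ≤ g a0 + g c0 := by
      calc g b0 + g c0 = g (b0 + c0) := (gadd _ _).symm
        _ = g a + g c' := by rw [← hac, gadd]
        _ ≤ g a0 + g c0 := add_le_add (hamax a ha) (hcmax c' hc')
    linarith
  -- x is in the halfspace f ≤ g a0
  have hxle : f x ≤ g a0 := by
    have hsub : convexHull ℝ (latticeEmb n '' A) ⊆ {y | f y ≤ g a0} := by
      apply convexHull_min
      · rintro y ⟨a, ha, rfl⟩; exact hamax a ha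
      · exact convex_halfSpace_le ⟨f.map_add, f.map_smul⟩ _
    exact hsub hx
  have hblt : g b0 < u := hfu _ (subset_convexHull ℝ _ ⟨b0, hb0, rfl⟩)
  linarith

/-- two finite nonempty subsets `A, B ⊆ ℤⁿ` satisfy `A + C = B + C` for some
finite nonempty `C ⊆ ℤⁿ` if and only if they have the same convex hull in `ℝⁿ`. -/
theorem analogous_iff_convexHull_eq (n : ℕ) (A B : Set (Fin n → ℤ))
    (hAfin : A.Finite) (hAne : A.Nonempty) (hBfin : B.Finite) (hBne : B.Nonempty) :
    (∃ C : Set (Fin n → ℤ), C.Finite ∧ C.Nonempty ∧ A + C = B + C) ↔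
      convexHull ℝ (latticeEmb n '' A) = convexHull ℝ (latticeEmb n '' B) := by
  constructor
  · rintro ⟨C, hCfin, hCne, h⟩
    exact Set.Subset.antisymm
      (hull_subset_of_add_eq n A B C hAfin hAne hBfin hBne hCfin hCne h)
      (hull_subset_of_add_eq n B A C hBfin hBne hAfin hAne hCfin hCne h.symm)
  · intro h
    set D : Set (Fin n → ℤ) := A ∪ B with hD
    have hDfin : D.Finite := hAfin.union hBfin
    have hDne : D.Nonempty := hAne.mono Set.subset_union_left
    have hhullA : ∀ c ∈ D, latticeEmb n c ∈ convexHull ℝ (latticeEmb n '' A) := by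
      rintro c (hc | hc)
      · exact subset_convexHull ℝ _ ⟨c, hc, rfl⟩
      · rw [h]; exact subset_convexHull ℝ _ ⟨c, hc, rfl⟩
    have hhullB : ∀ c ∈ D, latticeEmb n c ∈ convexHull ℝ (latticeEmb n '' B) := by
      rintro c (hc | hc)
      · rw [← h]; exact subset_convexHull ℝ _ ⟨c, hc, rfl⟩
      · exact subset_convexHull ℝ _ ⟨c, hc, rfl⟩
    obtain ⟨MA, hMA⟩ := step_lemma n A D Set.subset_union_left hDfin hhullA
    obtain ⟨MB, hMB⟩ := step_lemma n B D Set.subset_union_right hDfin hhullB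
    refine ⟨(max MA MB) • D, nsmul_set_finite hDfin _, nsmul_set_nonempty hDne _, ?_⟩
    rw [hMA _ (le_max_left _ _), hMB _ (le_max_right _ _)]
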